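/- Let a finitely generated group G act on a set T, and let x ∈ T have orbit with sub-exponential growth, i.e., setting A_n = {g·x : word length of g ≤ n}, lim inf_{n→∞} |A_{n+1} \ A_{n-1}| / |A_n| = 0. Then there is a subsequence (A_{n_k}) that is an averaging (Følner) sequence: for every generator s, |Δ_s A_{n_k}| / |A_{n_k}| → 0, where Δ_s A = {y ∈ A : s·y ∉ A} ∪ {y ∉ A : s·y ∈ A}. -/

import Mathlib

open Filter Topology Pointwise

private lemma ncard_biUnion_smul_le {G T : Type*} [Group G] [MulAction G T]
    (F : Finset G) (B : Set T) :
    (⋃ s ∈ F, (s : G) • B).ncard ≤ F.card * B.ncard := by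
  classical
  induction F using Finset.induction_on with
  | empty => simp
  | insert _ _ hnotmem ih =>
    rename_i a F
    rw [Finset.set_biUnion_insert]
    calc ((a • B) ∪ ⋃ s ∈ F, (s : G) • B).ncard
        ≤ (a • B).ncard + (⋃ s ∈ F, (s : G) • B).ncard := Set.ncard_union_le _ _
      _ ≤ B.ncard + F.card * B.ncard := by
          rw [Set.ncard_smul_set]; exact add_le_add le_rfl ih
      _ = (insert a F).card * B.ncard := by
          rw [Finset.card_insert_of_notMem hnotmem]; ring

/-- If the orbit of `x` under a finitely generated group has sub-exponential growth
(liminf |A_{n+1} \ A_{n-1}|/|A_n| = 0, where A_n is the orbit ball of radius n),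
then some subsequence of the balls is an averaging (Følner) sequence. -/
theorem stmt1 {G T : Type*} [Group G] [MulAction G T]
    (S : Finset G) (hsym : ∀ s ∈ S, s⁻¹ ∈ S)
    (hgen : Subgroup.closure (S : Set G) = ⊤)
    (x : T) (A : ℕ → Set T)
    (hA : ∀ n, A n = {y | ∃ g : G,
      (∃ l : List G, (∀ s ∈ l, s ∈ S) ∧ l.length ≤ n ∧ l.prod = g) ∧ g • x = y})
    (hfin : ∀ n, (A n).Finite)
    (hsub : Filter.atTop.liminf
        (fun n => ((A (n + 1) \ A (n - 1)).ncard : ℝ) / (A n).ncard) = 0) :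
    ∃ φ : ℕ → ℕ, StrictMono φ ∧ ∀ s ∈ S,
      Tendsto (fun k =>
          ((({y | y ∈ A (φ k) ∧ s • y ∉ A (φ k)} ∪
              {y | y ∉ A (φ k) ∧ s • y ∈ A (φ k)} : Set T)).ncard : ℝ) / (A (φ k)).ncard)
        atTop (𝓝 0) := by
  classical
  set f : ℕ → ℝ := fun n => ((A (n + 1) \ A (n - 1)).ncard : ℝ) / (A n).ncard with hf
  have hx : ∀ n, x ∈ A n := by
    intro n; rw [hA]
    exact ⟨1, ⟨[], by simp, by simp, by simp⟩, one_smul _ _⟩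
  have hmono : ∀ {m n : ℕ}, m ≤ n → A m ⊆ A n := by
    intro m n hmn y hy
    rw [hA] at hy ⊢
    obtain ⟨g, ⟨l, hl, hlen, hprod⟩, hg⟩ := hy
    exact ⟨g, ⟨l, hl, hlen.trans hmn, hprod⟩, hg⟩
  have hstep : ∀ s ∈ S, ∀ n : ℕ, ∀ y, y ∈ A n → s • y ∈ A (n + 1) := by
    intro s hs n y hy
    rw [hA] at hy ⊢
    obtain ⟨g, ⟨l, hl, hlen, hprod⟩, hg⟩ := hy
    refine ⟨s * g, ⟨s :: l, ?_, by simpa using Nat.succ_le_succ hlen, by simp [hprod]⟩, ?_⟩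
    · intro t ht
      rcases List.mem_cons.mp ht with h | h
      · exact h ▸ hs
      · exact hl t h
    · rw [mul_smul, hg]
  have hpos : ∀ n, 0 < ((A n).ncard : ℝ) := by
    intro n
    have : 0 < (A n).ncard := (Set.ncard_pos (hfin n)).mpr ⟨x, hx n⟩
    exact_mod_cast this
  have hf0 : ∀ n, 0 ≤ f n := fun n => div_nonneg (by positivity) (hpos n).le
  -- growth bound : A (n+1) is in the union of translates of A n
  have hgrow : ∀ n, (A (n + 1)).ncard ≤ (S.card + 1) * (A n).ncard := by
    intro n
    have hsubset : A (n + 1) ⊆ ⋃ s ∈ insert (1 : G) S, (s : G) • A n := by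
      intro y hy
      rw [hA] at hy
      obtain ⟨g, ⟨l, hl, hlen, hprod⟩, hg⟩ := hy
      cases l with
      | nil =>
        refine Set.mem_biUnion (Finset.mem_insert_self 1 S) ?_
        rw [← hg, ← hprod]
        simpa using hx n
      | cons s l' =>
        refine Set.mem_biUnion (Finset.mem_insert_of_mem (hl s List.mem_cons_self)) ?_
        refine ⟨l'.prod • x, ?_, ?_⟩
        · rw [hA]
          exact ⟨l'.prod, ⟨l', fun t ht => hl t (List.mem_cons_of_mem _ ht),
            Nat.le_of_succ_le_succ (by simpa using hlen), rfl⟩, rfl⟩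
        · show s • l'.prod • x = y
          rw [← mul_smul, ← List.prod_cons, hprod, hg]
    have hfinU : (⋃ s ∈ insert (1 : G) S, (s : G) • A n).Finite :=
      Set.Finite.biUnion (Finset.finite_toSet _) fun s _ => (hfin n).smul_set
    calc (A (n + 1)).ncard ≤ (⋃ s ∈ insert (1 : G) S, (s : G) • A n).ncard :=
          Set.ncard_le_ncard hsubset hfinU
      _ ≤ (insert (1 : G) S).card * (A n).ncard := ncard_biUnion_smul_le _ _
      _ ≤ (S.card + 1) * (A n).ncard := by
          exact Nat.mul_le_mul_right _ (by simpa [add_comm] using Finset.card_insert_le (1 : G) S)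
  have hfb : ∀ n, f n ≤ (S.card : ℝ) + 1 := by
    intro n
    rw [hf]
    rw [div_le_iff₀ (hpos n)]
    have h1 : ((A (n + 1) \ A (n - 1)).ncard : ℝ) ≤ ((A (n + 1)).ncard : ℝ) := by
      exact_mod_cast Set.ncard_le_ncard (Set.diff_subset) (hfin (n + 1))
    have h2 : ((A (n + 1)).ncard : ℝ) ≤ ((S.card : ℝ) + 1) * (A n).ncard := by
      exact_mod_cast hgrow n
    exact h1.trans h2
  have hcob : IsCoboundedUnder (· ≥ ·) atTop f :=
    IsBoundedUnder.isCoboundedUnder_ge (isBoundedUnder_of ⟨(S.card : ℝ) + 1, hfb⟩)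
  -- key inclusion for n ≥ 1
  have hincl : ∀ s ∈ S, ∀ n : ℕ, 1 ≤ n →
      ({y | y ∈ A n ∧ s • y ∉ A n} ∪ {y | y ∉ A n ∧ s • y ∈ A n} : Set T)
        ⊆ A (n + 1) \ A (n - 1) := by
    intro s hs n hn y hy
    rcases hy with ⟨hy1, hy2⟩ | ⟨hy1, hy2⟩
    · refine ⟨hmono (Nat.le_succ n) hy1, fun hc => hy2 ?_⟩
      have := hstep s hs (n - 1) y hc
      rwa [Nat.sub_add_cancel hn] at this
    · constructor
      · have := hstep s⁻¹ (hsym s hs) n (s • y) hy2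
        rwa [inv_smul_smul] at this
      · exact fun hc => hy1 (hmono (Nat.sub_le n 1) hc)
  have hbd : ∀ s ∈ S, ∀ n : ℕ, 1 ≤ n →
      ((({y | y ∈ A n ∧ s • y ∉ A n} ∪ {y | y ∉ A n ∧ s • y ∈ A n} : Set T)).ncard : ℝ)
        / (A n).ncard ≤ f n := by
    intro s hs n hn
    have hfin' : (A (n + 1) \ A (n - 1)).Finite := (hfin (n + 1)).diff
    have hcard : ((({y | y ∈ A n ∧ s • y ∉ A n} ∪ {y | y ∉ A n ∧ s • y ∈ A n} : Set T)).ncard : ℝ)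
        ≤ ((A (n + 1) \ A (n - 1)).ncard : ℝ) := by
      exact_mod_cast Set.ncard_le_ncard (hincl s hs n hn) hfin'
    show _ ≤ ((A (n + 1) \ A (n - 1)).ncard : ℝ) / (A n).ncard
    gcongr
  -- extract subsequence
  have hfreq : ∀ k : ℕ, ∃ᶠ n in atTop, 1 ≤ n ∧ f n < 1 / (k + 1) := by
    intro k
    have hlt : atTop.liminf f < 1 / ((k : ℝ) + 1) := by
      rw [hsub]; positivity
    have h1 := frequently_lt_of_liminf_lt hcob hlt
    exact (h1.and_eventually (eventually_ge_atTop 1)).mono fun n hn => ⟨hn.2, hn.1⟩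
  obtain ⟨φ, hφmono, hφ⟩ := Filter.extraction_forall_of_frequently hfreq
  refine ⟨φ, hφmono, fun s hs => ?_⟩
  have htend : Tendsto (fun k => f (φ k)) atTop (𝓝 0) := by
    apply squeeze_zero (fun k => hf0 _) (fun k => (hφ k).2.le)
    exact tendsto_one_div_add_atTop_nhds_zero_nat
  exact squeeze_zero
    (fun k => div_nonneg (by positivity) (hpos (φ k)).le)
    (fun k => hbd s hs (φ k) (hφ k).1) htend
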